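/- Let B be a real symmetric positive definite 3×3 matrix with det B = 1. Then for every real symmetric 3×3 matrix M, tr(B⁻¹·M) = 2·tr(ℂ(B):M). -/

import Mathlib

open Matrix MeasureTheory

noncomputable section

/-- 3×3 real matrices. -/
abbrev Mat3 := Matrix (Fin 3) (Fin 3) ℝ

/-- Rank-4 tensors on ℝ³. -/
abbrev Tens4 := Fin 3 → Fin 3 → Fin 3 → Fin 3 → ℝ

/-- Tensor (outer) product of two matrices: `(K ⊗ L)_{ijkl} = K_{ij} L_{kl}`. -/
def otimes (K L : Mat3) : Tens4 := fun i j k l => K i j * L k l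

/-- Symmetrization of a rank-4 tensor: the average over all 24 permutations of the indices. -/
def symmetrize (T : Tens4) : Tens4 := fun i j k l =>
  (∑ σ : Equiv.Perm (Fin 4),
      T (![i, j, k, l] (σ 0)) (![i, j, k, l] (σ 1)) (![i, j, k, l] (σ 2)) (![i, j, k, l] (σ 3)))
    / 24

/-- Contraction of a rank-4 tensor with a matrix: `(𝔹:M)_{ij} = Σ_{k,l} 𝔹_{ijkl} M_{kl}`. -/
def contr (T : Tens4) (M : Mat3) : Mat3 :=
  Matrix.of fun i j => ∑ k, ∑ l, T i j k l * M k l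

/-- Full contraction `N:𝔹:M = Σ_{i,j,k,l} N_{ij} 𝔹_{ijkl} M_{kl}`. -/
def dcontr (N : Mat3) (T : Tens4) (M : Mat3) : ℝ :=
  ∑ i, ∑ j, ∑ k, ∑ l, N i j * T i j k l * M k l

/-- The matrix `(B + s·I)⁻¹` (matrix inverse). -/
def res (B : Mat3) (s : ℝ) : Mat3 := (B + s • (1 : Mat3))⁻¹

/-- `A(B) = (1/2)·∫₀^∞ (B + s·I)⁻¹ / √(det(B + s·I)) ds`, entrywise. -/
def Amat (B : Mat3) : Mat3 :=
  Matrix.of fun i j =>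
    (1 / 2) * ∫ s in Set.Ioi (0 : ℝ),
      res B s i j / Real.sqrt (B + s • (1 : Mat3)).det

/-- `𝔸(B) = (3/4)·∫₀^∞ s·S((B+sI)⁻¹ ⊗ (B+sI)⁻¹) / √(det(B+sI)) ds`, entrywise. -/
def Atens (B : Mat3) : Tens4 := fun i j k l =>
  (3 / 4) * ∫ s in Set.Ioi (0 : ℝ),
    s * symmetrize (otimes (res B s) (res B s)) i j k l
      / Real.sqrt (B + s • (1 : Mat3)).det

/-- `ℂ(B) = (3/4)·∫₀^∞ S((B+sI)⁻¹ ⊗ (B+sI)⁻¹) / √(det(B+sI)) ds`, entrywise. -/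
def Ctens (B : Mat3) : Tens4 := fun i j k l =>
  (3 / 4) * ∫ s in Set.Ioi (0 : ℝ),
    symmetrize (otimes (res B s) (res B s)) i j k l
      / Real.sqrt (B + s • (1 : Mat3)).det

end

open Equiv in
private lemma sum_perm_succ' {n : ℕ} (g : Equiv.Perm (Fin (n+1)) → ℝ) :
    ∑ σ : Equiv.Perm (Fin (n+1)), g σ
      = ∑ p : Fin (n+1), ∑ τ : Equiv.Perm (Fin n), g (Equiv.Perm.decomposeFin.symm (p, τ)) := by
  rw [← Equiv.sum_comp Equiv.Perm.decomposeFin.symm g, Fintype.sum_prod_type]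

open Equiv in
private lemma sum_perm_four (g : Fin 4 → Fin 4 → Fin 4 → Fin 4 → ℝ) :
    ∑ σ : Equiv.Perm (Fin 4), g (σ 0) (σ 1) (σ 2) (σ 3) =
      g 0 1 2 3 + g 0 1 3 2 + g 0 2 1 3 + g 0 2 3 1 + g 0 3 2 1 + g 0 3 1 2 +
      g 1 0 2 3 + g 1 0 3 2 + g 1 2 0 3 + g 1 2 3 0 + g 1 3 2 0 + g 1 3 0 2 +
      g 2 1 0 3 + g 2 1 3 0 + g 2 0 1 3 + g 2 0 3 1 + g 2 3 0 1 + g 2 3 1 0 +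
      g 3 1 2 0 + g 3 1 0 2 + g 3 2 1 0 + g 3 2 0 1 + g 3 0 2 1 + g 3 0 1 2 := by
  rw [sum_perm_succ']
  simp only [sum_perm_succ']
  simp only [Fin.sum_univ_succ, Fin.sum_univ_zero, Finset.univ_unique, Finset.sum_singleton,
    Equiv.Perm.decomposeFin_symm_apply_zero, Equiv.Perm.decomposeFin_symm_apply_one,
    show (2:Fin 4) = (1:Fin 3).succ from rfl, show (3:Fin 4) = (2:Fin 3).succ from rfl,
    show (2:Fin 3) = (1:Fin 2).succ from rfl,
    Equiv.Perm.decomposeFin_symm_apply_succ, swap_apply_def]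
  norm_num [Fin.ext_iff]
  ring

private lemma symmetrize_apply (T : Tens4) (i j k l : Fin 3) :
    symmetrize T i j k l =
      (T i j k l + T i j l k + T i k j l + T i k l j + T i l k j + T i l j k +
       T j i k l + T j i l k + T j k i l + T j k l i + T j l k i + T j l i k +
       T k j i l + T k j l i + T k i j l + T k i l j + T k l i j + T k l j i +
       T l j k i + T l j i k + T l k j i + T l k i j + T l i k j + T l i j k) / 24 := by
  have h := sum_perm_four
    (fun a b c d => T (![i,j,k,l] a) (![i,j,k,l] b) (![i,j,k,l] c) (![i,j,k,l] d))
  simp only [Matrix.cons_val_zero, Matrix.cons_val_one, Matrix.head_cons,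
    Matrix.cons_val_two, Matrix.cons_val_three, Matrix.tail_cons] at h
  unfold symmetrize
  rw [h]

private lemma sym_contract (R M : Mat3) (hR : Rᵀ = R) (hM : Mᵀ = M) :
    ∑ i, ∑ k, ∑ l, symmetrize (otimes R R) i i k l * M k l
      = (R.trace * (R * M).trace + 2 * (R * R * M).trace) / 3 := by
  have hRe : ∀ i j : Fin 3, R j i = R i j := fun i j => congrFun (congrFun hR i) j
  have hMe : ∀ i j : Fin 3, M j i = M i j := fun i j => congrFun (congrFun hM i) j
  simp only [symmetrize_apply, otimes]
  simp only [Matrix.trace, Matrix.diag, Matrix.mul_apply, Fin.sum_univ_three]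
  rw [hRe 0 1, hRe 0 2, hRe 1 2, hMe 0 1, hMe 0 2, hMe 1 2]
  ring

private lemma entry_pencil (B : Mat3) (s : ℝ) (i j : Fin 3) :
    (B + s • (1 : Mat3)) i j = B i j + s * (if i = j then 1 else 0) := by
  simp [Matrix.add_apply, Matrix.smul_apply, Matrix.one_apply, smul_eq_mul]

private lemma det_pencil (B : Mat3) (s : ℝ) :
    (B + s • (1 : Mat3)).det = s^3 + B.trace * s^2 + B.adjugate.trace * s + B.det := by
  simp only [Matrix.det_fin_three, Matrix.adjugate_fin_three, Matrix.trace, Matrix.diag,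
    Fin.sum_univ_three, entry_pencil, Matrix.of_apply, Matrix.cons_val_zero,
    Matrix.cons_val_one, Matrix.head_cons, Matrix.cons_val_two, Matrix.tail_cons]
  norm_num [Fin.ext_iff]
  ring

private lemma adjtrace_pencil (B : Mat3) (s : ℝ) :
    (B + s • (1 : Mat3)).adjugate.trace = 3 * s^2 + 2 * B.trace * s + B.adjugate.trace := by
  simp only [Matrix.adjugate_fin_three, Matrix.trace, Matrix.diag,
    Fin.sum_univ_three, entry_pencil, Matrix.of_apply, Matrix.cons_val_zero,
    Matrix.cons_val_one, Matrix.head_cons, Matrix.cons_val_two, Matrix.tail_cons]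
  norm_num [Fin.ext_iff]
  ring

private lemma T_pencil (B M : Mat3) (s : ℝ) :
    ((B + s • (1 : Mat3)).adjugate * M).trace
      = M.trace * s^2 + (B.trace * M.trace - (B * M).trace) * s + (B.adjugate * M).trace := by
  simp only [Matrix.adjugate_fin_three, Matrix.trace, Matrix.diag, Matrix.mul_apply,
    Fin.sum_univ_three, entry_pencil, Matrix.of_apply, Matrix.cons_val_zero,
    Matrix.cons_val_one, Matrix.head_cons, Matrix.cons_val_two, Matrix.tail_cons]
  norm_num [Fin.ext_iff]
  ring

private lemma core_pencil (B M : Mat3) (s : ℝ) :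
    ((B + s • (1 : Mat3)).adjugate * (B + s • (1 : Mat3)).adjugate * M).trace
      = (M.trace * s^2 + (B.trace * M.trace - (B * M).trace) * s + (B.adjugate * M).trace)
          * (3 * s^2 + 2 * B.trace * s + B.adjugate.trace)
        - (2 * M.trace * s + (B.trace * M.trace - (B * M).trace))
          * (s^3 + B.trace * s^2 + B.adjugate.trace * s + B.det) := by
  simp only [Matrix.adjugate_fin_three, Matrix.trace, Matrix.diag, Matrix.mul_apply,
    Matrix.det_fin_three, Fin.sum_univ_three, entry_pencil, Matrix.of_apply,
    Matrix.cons_val_zero, Matrix.cons_val_one, Matrix.head_cons, Matrix.cons_val_two,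
    Matrix.tail_cons]
  norm_num [Fin.ext_iff]
  ring

private lemma adj_entry_pencil (B : Mat3) (s : ℝ) (i j : Fin 3) :
    (B + s • (1 : Mat3)).adjugate i j
      = (if i = j then 1 else 0) * s^2 + (B.trace * (if i = j then 1 else 0) - B i j) * s
        + B.adjugate i j := by
  fin_cases i <;> fin_cases j <;>
    simp only [Matrix.adjugate_fin_three, Matrix.trace, Matrix.diag,
      Fin.sum_univ_three, entry_pencil, Matrix.of_apply, Matrix.cons_val_zero,
      Matrix.cons_val_one, Matrix.head_cons, Matrix.cons_val_two, Matrix.tail_cons,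
      Fin.reduceFinMk, Matrix.cons_val] <;>
    norm_num [Fin.ext_iff, show ((⟨2, by omega⟩ : Fin 3)) = 2 from rfl] <;> ring

open Set Filter MeasureTheory

private lemma quad_abs_bound (x2 x1 x0 s : ℝ) (hs : 1 ≤ s) :
    |x2*s^2 + x1*s + x0| ≤ (|x2|+|x1|+|x0|) * s^2 := by
  have hs0 : (0:ℝ) ≤ s := le_trans zero_le_one hs
  have h := (abs_add_le (x2*s^2 + x1*s) x0).trans (add_le_add_left (abs_add_le (x2*s^2) (x1*s)) _)
  rw [abs_mul, abs_mul, abs_of_nonneg (by positivity : (0:ℝ) ≤ s^2), abs_of_nonneg hs0] at h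
  nlinarith [abs_nonneg x2, abs_nonneg x1, abs_nonneg x0,
    mul_le_mul_of_nonneg_left (show s ≤ s^2 by nlinarith) (abs_nonneg x1),
    mul_le_mul_of_nonneg_left (show (1:ℝ) ≤ s^2 by nlinarith) (abs_nonneg x0)]

private lemma cubic_abs_bound (c2 c1 c0 s : ℝ) (hs : 1 ≤ s) :
    |s^3 + c2*s^2 + c1*s + c0| ≤ (1+|c2|+|c1|+|c0|) * s^3 := by
  have hs0 : (0:ℝ) ≤ s := le_trans zero_le_one hs
  have h := (abs_add_le (s^3 + c2*s^2 + c1*s) c0).trans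
    (add_le_add_left ((abs_add_le (s^3 + c2*s^2) (c1*s)).trans
      (add_le_add_left (abs_add_le (s^3) (c2*s^2)) _)) _)
  rw [abs_mul, abs_mul, abs_of_nonneg (by positivity : (0:ℝ) ≤ s^2), abs_of_nonneg hs0,
    abs_of_nonneg (by positivity : (0:ℝ) ≤ s^3)] at h
  nlinarith [abs_nonneg c2, abs_nonneg c1, abs_nonneg c0,
    mul_le_mul_of_nonneg_left (show s^2 ≤ s^3 by nlinarith) (abs_nonneg c2),
    mul_le_mul_of_nonneg_left (show s ≤ s^3 by nlinarith) (abs_nonneg c1),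
    mul_le_mul_of_nonneg_left (show (1:ℝ) ≤ s^3 by nlinarith) (abs_nonneg c0)]

private lemma lin_abs_bound (x1 x0 s : ℝ) (hs : 1 ≤ s) :
    |x1*s + x0| ≤ (|x1|+|x0|) * s := by
  have hs0 : (0:ℝ) ≤ s := le_trans zero_le_one hs
  have h := abs_add_le (x1*s) x0
  rw [abs_mul, abs_of_nonneg hs0] at h
  nlinarith [abs_nonneg x1, abs_nonneg x0]

/-- lower bound for the cubic, for s large -/
private lemma cubic_lower (c2 c1 c0 : ℝ) (s : ℝ) (hs : 2*(|c2|+|c1|+|c0|) + 2 ≤ s) :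
    s^3/2 ≤ s^3 + c2*s^2 + c1*s + c0 := by
  have h2 : (2:ℝ) ≤ s := by nlinarith [abs_nonneg c2, abs_nonneg c1, abs_nonneg c0]
  have h1 : (1:ℝ) ≤ s := by linarith
  have hc2 : -|c2| ≤ c2 := neg_abs_le c2
  have hc1 : -|c1| ≤ c1 := neg_abs_le c1
  have hc0 : -|c0| ≤ c0 := neg_abs_le c0
  nlinarith [abs_nonneg c2, abs_nonneg c1, abs_nonneg c0, sq_nonneg s, sq_nonneg (s-1)]

/-- generic integrability: `p` continuous with `|p s| ≤ A s⁴` for `s ≥ 1`, over `d² √d`. -/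
private lemma generic_integrable (c2 c1 c0 : ℝ)
    (hpos : ∀ s : ℝ, 0 ≤ s → 0 < s^3 + c2*s^2 + c1*s + c0)
    (p : ℝ → ℝ) (hp : Continuous p) (A : ℝ) (hA : 0 ≤ A)
    (hbound : ∀ s : ℝ, 1 ≤ s → |p s| ≤ A * s^4) :
    IntegrableOn (fun s => p s /
      ((s^3 + c2*s^2 + c1*s + c0)^2 * Real.sqrt (s^3 + c2*s^2 + c1*s + c0))) (Ioi 0) := by
  obtain ⟨d, hd_def⟩ : ∃ d : ℝ → ℝ, d = fun s => s^3 + c2*s^2 + c1*s + c0 := ⟨_, rfl⟩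
  have hfold : (fun s => p s / ((s^3 + c2*s^2 + c1*s + c0)^2 * Real.sqrt (s^3 + c2*s^2 + c1*s + c0)))
      = fun s => p s / (d s^2 * Real.sqrt (d s)) := by rw [hd_def]
  rw [hfold]
  have hpos : ∀ s : ℝ, 0 ≤ s → 0 < d s := by rw [hd_def]; exact hpos
  have hd_cont : Continuous d := by rw [hd_def]; fun_prop
  have hf_cont : ContinuousOn (fun s => p s / (d s^2 * Real.sqrt (d s))) (Ici 0) := by
    apply ContinuousOn.div (hp.continuousOn)
    · exact ((hd_cont.pow 2).continuousOn.mul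
        ((Real.continuous_sqrt.comp hd_cont).continuousOn))
    · intro x hx
      have := hpos x hx
      have hsq : 0 < Real.sqrt (d x) := Real.sqrt_pos.2 this
      positivity
  set S : ℝ := 2*(|c2|+|c1|+|c0|) + 2 with hS_def
  have hS2 : (2:ℝ) ≤ S := by nlinarith [abs_nonneg c2, abs_nonneg c1, abs_nonneg c0]
  have hS0 : (0:ℝ) < S := by linarith
  rw [show Ioi (0:ℝ) = Ioc 0 S ∪ Ioi S from (Ioc_union_Ioi_eq_Ioi hS0.le).symm]
  apply IntegrableOn.union
  · exact (hf_cont.mono (Icc_subset_Ici_self)).integrableOn_compact isCompact_Icc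
      |>.mono_set Ioc_subset_Icc_self
  · have hg : IntegrableOn (fun s : ℝ => (4*A) / s^2) (Ioi S) := by
      have h1 : IntegrableOn (fun s : ℝ => s ^ (-2:ℝ)) (Ioi S) :=
        integrableOn_Ioi_rpow_of_lt (by norm_num) hS0
      have h2 : IntegrableOn (fun s : ℝ => (4*A) * s ^ (-2:ℝ)) (Ioi S) := h1.const_mul _
      apply h2.congr_fun _ measurableSet_Ioi
      intro x hx
      have hx0 : (0:ℝ) < x := lt_trans hS0 hx
      show (4*A) * x ^ (-2:ℝ) = (4*A) / x^2
      rw [Real.rpow_neg hx0.le, show ((2:ℝ)) = ((2:ℕ):ℝ) by norm_num, Real.rpow_natCast,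
        div_eq_mul_inv]
    apply Integrable.mono' hg
      ((hf_cont.mono (Ioi_subset_Ici hS0.le)).aestronglyMeasurable measurableSet_Ioi)
    rw [ae_restrict_iff' measurableSet_Ioi]
    apply ae_of_all
    intro s hs
    have hsS : S < s := hs
    have hs2 : (2:ℝ) ≤ s := le_trans hS2 hsS.le
    have hs1 : (1:ℝ) ≤ s := by linarith
    have hs0 : (0:ℝ) < s := by linarith
    have hdl : s^3/2 ≤ d s := by
      rw [hd_def]; exact cubic_lower c2 c1 c0 s (by rw [hS_def] at hsS; linarith)
    have hdpos : 0 < d s := hpos s hs0.le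
    have hsq : s ≤ Real.sqrt (d s) := by
      have h := Real.sqrt_le_sqrt (show s^2 ≤ d s by
        nlinarith [mul_le_mul_of_nonneg_left hs2 (sq_nonneg s)])
      rwa [Real.sqrt_sq hs0.le] at h
    have hden : s^7/4 ≤ d s^2 * Real.sqrt (d s) := by
      have h1 : (s^3/2)^2 * s ≤ d s^2 * Real.sqrt (d s) :=
        mul_le_mul (pow_le_pow_left₀ (by positivity) hdl 2) hsq hs0.le (by positivity)
      nlinarith
    have hdenpos : (0:ℝ) < d s^2 * Real.sqrt (d s) := by
      have := Real.sqrt_pos.2 hdpos; positivity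
    have hnorm : ‖p s / (d s^2 * Real.sqrt (d s))‖ = |p s| / (d s^2 * Real.sqrt (d s)) := by
      rw [Real.norm_eq_abs, abs_div, abs_of_pos hdenpos]
    rw [hnorm]
    calc |p s| / (d s^2 * Real.sqrt (d s)) ≤ (A * s^4) / (s^7/4) :=
          div_le_div₀ (by positivity) (hbound s hs1) (by positivity) hden
      _ = (4*A) / s^3 := by field_simp
      _ ≤ (4*A) / s^2 :=
          div_le_div_of_nonneg_left (by linarith) (by positivity)
            (by nlinarith [mul_le_mul_of_nonneg_left hs1 (sq_nonneg s)])

private lemma generic_FTC (c2 c1 c0 a2 a1 a0 : ℝ)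
    (hpos : ∀ s : ℝ, 0 ≤ s → 0 < s^3 + c2*s^2 + c1*s + c0) (h0 : c0 = 1) :
    (∫ s in Ioi (0:ℝ),
        (3*(a2*s^2+a1*s+a0)*(3*s^2+2*c2*s+c1) - 2*(2*a2*s+a1)*(s^3+c2*s^2+c1*s+c0)) /
          ((s^3+c2*s^2+c1*s+c0)^2 * Real.sqrt (s^3+c2*s^2+c1*s+c0))) = 2*a0 := by
  have hintp : IntegrableOn (fun s =>
      (3*(a2*s^2+a1*s+a0)*(3*s^2+2*c2*s+c1) - 2*(2*a2*s+a1)*(s^3+c2*s^2+c1*s+c0)) /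
        ((s^3+c2*s^2+c1*s+c0)^2 * Real.sqrt (s^3+c2*s^2+c1*s+c0))) (Ioi 0) := by
    apply generic_integrable c2 c1 c0 hpos _ (by fun_prop)
      (3*((|a2|+|a1|+|a0|) * (|(3:ℝ)|+|2*c2|+|c1|)) + 2*((|2*a2|+|a1|) * (1+|c2|+|c1|+|c0|)))
      (by positivity)
    intro s hs1
    have hT := quad_abs_bound a2 a1 a0 s hs1
    have hd' := quad_abs_bound 3 (2*c2) c1 s hs1
    have hT' := lin_abs_bound (2*a2) a1 s hs1
    have hd := cubic_abs_bound c2 c1 c0 s hs1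
    have hs0 : (0:ℝ) ≤ s := le_trans zero_le_one hs1
    have h1 : |3*(a2*s^2+a1*s+a0)*(3*s^2+2*c2*s+c1) - 2*(2*a2*s+a1)*(s^3+c2*s^2+c1*s+c0)|
        ≤ 3*(|a2*s^2+a1*s+a0| * |3*s^2+2*c2*s+c1|)
          + 2*(|2*a2*s+a1| * |s^3+c2*s^2+c1*s+c0|) := by
      calc _ ≤ |3*(a2*s^2+a1*s+a0)*(3*s^2+2*c2*s+c1)| + |2*(2*a2*s+a1)*(s^3+c2*s^2+c1*s+c0)| :=
            abs_sub _ _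
        _ = _ := by rw [abs_mul, abs_mul, abs_mul, abs_mul]; norm_num; ring
    have h2 : |a2*s^2+a1*s+a0| * |3*s^2+2*c2*s+c1|
        ≤ ((|a2|+|a1|+|a0|)*s^2) * ((|(3:ℝ)|+|2*c2|+|c1|)*s^2) := by
      refine mul_le_mul hT ?_ (abs_nonneg _) (by positivity)
      have := hd'
      calc |3*s^2+2*c2*s+c1| = |(3:ℝ)*s^2+(2*c2)*s+c1| := by ring_nf
        _ ≤ (|(3:ℝ)|+|2*c2|+|c1|)*s^2 := quad_abs_bound 3 (2*c2) c1 s hs1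
    have h3 : |2*a2*s+a1| * |s^3+c2*s^2+c1*s+c0|
        ≤ ((|2*a2|+|a1|)*s) * ((1+|c2|+|c1|+|c0|)*s^3) := by
      refine mul_le_mul ?_ hd (abs_nonneg _) (by positivity)
      calc |2*a2*s+a1| = |(2*a2)*s+a1| := by ring_nf
        _ ≤ (|2*a2|+|a1|)*s := hT'
    nlinarith [abs_nonneg (a2*s^2+a1*s+a0), abs_nonneg (3*s^2+2*c2*s+c1),
      abs_nonneg (2*a2*s+a1), abs_nonneg (s^3+c2*s^2+c1*s+c0)]
  -- the antiderivative
  have hderiv : ∀ x ∈ Ioi (0:ℝ), HasDerivAt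
      (fun s => (a2*s^2+a1*s+a0) / ((s^3+c2*s^2+c1*s+c0) * Real.sqrt (s^3+c2*s^2+c1*s+c0)))
      (-(1/2) * ((3*(a2*x^2+a1*x+a0)*(3*x^2+2*c2*x+c1) - 2*(2*a2*x+a1)*(x^3+c2*x^2+c1*x+c0)) /
          ((x^3+c2*x^2+c1*x+c0)^2 * Real.sqrt (x^3+c2*x^2+c1*x+c0)))) x := by
    intro x hx
    have hx0 : (0:ℝ) < x := hx
    have hdx : 0 < x^3+c2*x^2+c1*x+c0 := hpos x hx0.le
    have hT : HasDerivAt (fun s : ℝ => a2*s^2+a1*s+a0) (2*a2*x+a1) x := by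
      have h := (((hasDerivAt_pow 2 x).const_mul a2).add
        ((hasDerivAt_id x).const_mul a1)).add_const a0
      refine h.congr_deriv ?_
      push_cast; ring
    have hd : HasDerivAt (fun s : ℝ => s^3+c2*s^2+c1*s+c0) (3*x^2+2*c2*x+c1) x := by
      have h := (((hasDerivAt_pow 3 x).add ((hasDerivAt_pow 2 x).const_mul c2)).add
        ((hasDerivAt_id x).const_mul c1)).add_const c0
      refine h.congr_deriv ?_
      push_cast; ring
    have hq : HasDerivAt (fun s : ℝ => Real.sqrt (s^3+c2*s^2+c1*s+c0))
        ((3*x^2+2*c2*x+c1) / (2*Real.sqrt (x^3+c2*x^2+c1*x+c0))) x := hd.sqrt (ne_of_gt hdx)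
    have hqpos : 0 < Real.sqrt (x^3+c2*x^2+c1*x+c0) := Real.sqrt_pos.2 hdx
    have hden := hd.mul hq
    have hne : (x^3+c2*x^2+c1*x+c0) * Real.sqrt (x^3+c2*x^2+c1*x+c0) ≠ 0 := by positivity
    have hF := hT.div hden hne
    refine hF.congr_deriv ?_
    simp only [Pi.mul_apply]
    have hq2 : Real.sqrt (x^3+c2*x^2+c1*x+c0)^2 = x^3+c2*x^2+c1*x+c0 := Real.sq_sqrt hdx.le
    set q := Real.sqrt (x^3+c2*x^2+c1*x+c0) with hq_def
    rw [← hq2]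
    have hqne : q ≠ 0 := ne_of_gt hqpos
    field_simp
    ring
  -- continuity on [0, ∞)
  have hFcont : ContinuousOn
      (fun s => (a2*s^2+a1*s+a0) / ((s^3+c2*s^2+c1*s+c0) * Real.sqrt (s^3+c2*s^2+c1*s+c0)))
      (Ici 0) := by
    apply ContinuousOn.div (by fun_prop)
    · exact (by fun_prop : Continuous fun s : ℝ => s^3+c2*s^2+c1*s+c0).continuousOn.mul
        ((Real.continuous_sqrt.comp (by fun_prop)).continuousOn)
    · intro x hx
      have h := hpos x hx
      have := Real.sqrt_pos.2 h
      positivity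
  -- limit at infinity
  have htends : Filter.Tendsto
      (fun s => (a2*s^2+a1*s+a0) / ((s^3+c2*s^2+c1*s+c0) * Real.sqrt (s^3+c2*s^2+c1*s+c0)))
      Filter.atTop (nhds 0) := by
    have h' : Filter.Tendsto (fun s : ℝ => (2*(|a2|+|a1|+|a0|))/s) Filter.atTop (nhds 0) :=
      Filter.Tendsto.div_atTop tendsto_const_nhds Filter.tendsto_id
    apply squeeze_zero_norm' _ h'
    · filter_upwards [Filter.eventually_ge_atTop (2*(|c2|+|c1|+|c0|) + 2)] with s hsS
      have hs2 : (2:ℝ) ≤ s := by nlinarith [abs_nonneg c2, abs_nonneg c1, abs_nonneg c0]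
      have hs1 : (1:ℝ) ≤ s := by linarith
      have hs0 : (0:ℝ) < s := by linarith
      have hdl : s^3/2 ≤ s^3+c2*s^2+c1*s+c0 := cubic_lower c2 c1 c0 s hsS
      have hdpos : 0 < s^3+c2*s^2+c1*s+c0 := hpos s hs0.le
      have hsq : s ≤ Real.sqrt (s^3+c2*s^2+c1*s+c0) := by
        have h := Real.sqrt_le_sqrt (show s^2 ≤ s^3+c2*s^2+c1*s+c0 by
          nlinarith [mul_le_mul_of_nonneg_left hs2 (sq_nonneg s)])
        rwa [Real.sqrt_sq hs0.le] at h
      have hden : s^4/2 ≤ (s^3+c2*s^2+c1*s+c0) * Real.sqrt (s^3+c2*s^2+c1*s+c0) := by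
        have h1 : (s^3/2) * s ≤ (s^3+c2*s^2+c1*s+c0) * Real.sqrt (s^3+c2*s^2+c1*s+c0) :=
          mul_le_mul hdl hsq hs0.le (by positivity)
        nlinarith
      have hdenpos : 0 < (s^3+c2*s^2+c1*s+c0) * Real.sqrt (s^3+c2*s^2+c1*s+c0) := by
        have := Real.sqrt_pos.2 hdpos; positivity
      rw [Real.norm_eq_abs, abs_div, abs_of_pos hdenpos]
      calc |a2*s^2+a1*s+a0| / ((s^3+c2*s^2+c1*s+c0) * Real.sqrt (s^3+c2*s^2+c1*s+c0))
          ≤ ((|a2|+|a1|+|a0|)*s^2) / (s^4/2) :=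
            div_le_div₀ (by positivity) (quad_abs_bound a2 a1 a0 s hs1) (by positivity) hden
        _ = (2*(|a2|+|a1|+|a0|))/s^2 := by field_simp
        _ ≤ (2*(|a2|+|a1|+|a0|))/s :=
            div_le_div_of_nonneg_left (by positivity) (by positivity)
              (by nlinarith)
  have key := integral_Ioi_of_hasDerivAt_of_tendsto (hFcont 0 self_mem_Ici) hderiv
    (hintp.const_mul (-(1/2))) htends
  rw [MeasureTheory.integral_const_mul] at key
  have hF0 : (a2*(0:ℝ)^2+a1*0+a0) / (((0:ℝ)^3+c2*0^2+c1*0+c0) * Real.sqrt (0^3+c2*0^2+c1*0+c0))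
      = a0 := by
    rw [h0]; norm_num
  simp only [hF0] at key
  norm_num at key
  linarith [key]


open Set Filter

private lemma res_smul (B : Mat3) (s : ℝ) :
    res B s = ((B + s • (1:Mat3)).det)⁻¹ • (B + s • (1:Mat3)).adjugate := by
  rw [res, Matrix.inv_def, Ring.inverse_eq_inv]

private lemma hBt_of_posdef (B : Mat3) (hB : B.PosDef) : Bᵀ = B := by
  ext i j
  have h := congrFun (congrFun hB.1 i) j
  simpa [Matrix.conjTranspose_apply] using h

private lemma res_symm (B : Mat3) (hB : B.PosDef) (s : ℝ) : (res B s)ᵀ = res B s := by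
  rw [res, Matrix.transpose_nonsing_inv]
  congr 1
  rw [Matrix.transpose_add, hBt_of_posdef B hB, Matrix.transpose_smul, Matrix.transpose_one]

private lemma hpos_of_posdef (B : Mat3) (hB : B.PosDef) :
    ∀ s : ℝ, 0 ≤ s → 0 < s^3 + B.trace*s^2 + B.adjugate.trace*s + B.det := by
  intro s hs
  have h : (B + s • (1:Mat3)).PosDef := by
    apply hB.add_posSemidef
    rw [Matrix.smul_one_eq_diagonal]
    exact Matrix.PosSemidef.diagonal (fun _ => hs)
  have hd := h.det_pos
  rwa [det_pencil] at hd

private lemma entry_int (B : Mat3) (hB : B.PosDef) (a b c d : Fin 3) :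
    MeasureTheory.IntegrableOn
      (fun s => res B s a b * res B s c d / Real.sqrt ((B + s • (1:Mat3)).det)) (Ioi 0) := by
  have h1 : (fun s => res B s a b * res B s c d / Real.sqrt ((B + s • (1:Mat3)).det))
      = fun s => ((B + s • (1:Mat3)).adjugate a b * (B + s • (1:Mat3)).adjugate c d) /
          ((s^3 + B.trace*s^2 + B.adjugate.trace*s + B.det)^2
            * Real.sqrt (s^3 + B.trace*s^2 + B.adjugate.trace*s + B.det)) := by
    funext s
    rw [res_smul]
    simp only [Matrix.smul_apply, smul_eq_mul, det_pencil]
    rw [div_eq_mul_inv, div_eq_mul_inv, mul_inv, ← inv_pow]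
    ring
  rw [h1]
  apply generic_integrable _ _ _ (hpos_of_posdef B hB) _
    (by simp only [adj_entry_pencil]; fun_prop)
    (((|(if a = b then (1:ℝ) else 0)| + |B.trace*(if a = b then (1:ℝ) else 0) - B a b|
        + |B.adjugate a b|))
      * ((|(if c = d then (1:ℝ) else 0)| + |B.trace*(if c = d then (1:ℝ) else 0) - B c d|
        + |B.adjugate c d|)))
    (by positivity)
  intro s hs1
  simp only [adj_entry_pencil]
  have h2 := quad_abs_bound (if a = b then (1:ℝ) else 0)
    (B.trace*(if a = b then (1:ℝ) else 0) - B a b) (B.adjugate a b) s hs1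
  have h3 := quad_abs_bound (if c = d then (1:ℝ) else 0)
    (B.trace*(if c = d then (1:ℝ) else 0) - B c d) (B.adjugate c d) s hs1
  calc |((if a = b then (1:ℝ) else 0) * s^2 + (B.trace*(if a = b then (1:ℝ) else 0) - B a b) * s
          + B.adjugate a b)
        * ((if c = d then (1:ℝ) else 0) * s^2 + (B.trace*(if c = d then (1:ℝ) else 0) - B c d) * s
          + B.adjugate c d)|
      = |(if a = b then (1:ℝ) else 0) * s^2 + (B.trace*(if a = b then (1:ℝ) else 0) - B a b) * s
          + B.adjugate a b|
        * |(if c = d then (1:ℝ) else 0) * s^2 + (B.trace*(if c = d then (1:ℝ) else 0) - B c d) * s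
          + B.adjugate c d| := abs_mul _ _
    _ ≤ ((|(if a = b then (1:ℝ) else 0)| + |B.trace*(if a = b then (1:ℝ) else 0) - B a b|
          + |B.adjugate a b|) * s^2)
        * ((|(if c = d then (1:ℝ) else 0)| + |B.trace*(if c = d then (1:ℝ) else 0) - B c d|
          + |B.adjugate c d|) * s^2) :=
        mul_le_mul h2 h3 (abs_nonneg _) (by positivity)
    _ = _ := by ring

private lemma trace_rewrite (B M : Mat3) (s : ℝ) (hd : (0:ℝ) < s^3 + B.trace*s^2 + B.adjugate.trace*s + B.det) :
    ((res B s).trace * (res B s * M).trace + 2 * (res B s * res B s * M).trace)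
      / Real.sqrt ((B + s • (1:Mat3)).det)
    = (3*(M.trace*s^2 + (B.trace*M.trace - (B*M).trace)*s + (B.adjugate*M).trace)
          *(3*s^2+2*B.trace*s+B.adjugate.trace)
        - 2*(2*M.trace*s + (B.trace*M.trace - (B*M).trace))
          *(s^3+B.trace*s^2+B.adjugate.trace*s+B.det))
      / ((s^3+B.trace*s^2+B.adjugate.trace*s+B.det)^2
          * Real.sqrt (s^3+B.trace*s^2+B.adjugate.trace*s+B.det)) := by
  have htr : (res B s).trace
      = (s^3+B.trace*s^2+B.adjugate.trace*s+B.det)⁻¹ * (3*s^2+2*B.trace*s+B.adjugate.trace) := by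
    rw [res_smul, Matrix.trace_smul, adjtrace_pencil, det_pencil, smul_eq_mul]
  have htrM : (res B s * M).trace
      = (s^3+B.trace*s^2+B.adjugate.trace*s+B.det)⁻¹
        * (M.trace*s^2 + (B.trace*M.trace - (B*M).trace)*s + (B.adjugate*M).trace) := by
    rw [res_smul, Matrix.smul_mul, Matrix.trace_smul, T_pencil, det_pencil, smul_eq_mul]
  have htrMM : (res B s * res B s * M).trace
      = (s^3+B.trace*s^2+B.adjugate.trace*s+B.det)⁻¹
        * ((s^3+B.trace*s^2+B.adjugate.trace*s+B.det)⁻¹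
          * ((M.trace*s^2 + (B.trace*M.trace - (B*M).trace)*s + (B.adjugate*M).trace)
              * (3*s^2+2*B.trace*s+B.adjugate.trace)
            - (2*M.trace*s + (B.trace*M.trace - (B*M).trace))
              * (s^3+B.trace*s^2+B.adjugate.trace*s+B.det))) := by
    rw [res_smul]
    simp only [Matrix.smul_mul, Matrix.mul_smul, Matrix.trace_smul, smul_eq_mul,
      core_pencil, det_pencil]
  rw [htr, htrM, htrMM, det_pencil]
  have hne : s^3+B.trace*s^2+B.adjugate.trace*s+B.det ≠ 0 := ne_of_gt hd
  field_simp
  ring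

private lemma matrix_FTC (B : Mat3) (hB : B.PosDef) (hdet : B.det = 1) (M : Mat3) :
    (∫ s in Ioi (0:ℝ),
        ((res B s).trace * (res B s * M).trace + 2 * (res B s * res B s * M).trace)
          / Real.sqrt ((B + s • (1:Mat3)).det))
      = 2 * (B.adjugate * M).trace := by
  rw [MeasureTheory.setIntegral_congr_fun measurableSet_Ioi
    (fun s (hs : s ∈ Ioi (0:ℝ)) => trace_rewrite B M s
      (hpos_of_posdef B hB s (le_of_lt hs)))]
  exact generic_FTC B.trace B.adjugate.trace B.det M.trace
    (B.trace*M.trace - (B*M).trace) ((B.adjugate*M).trace) (hpos_of_posdef B hB) hdet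

theorem trace_inv_mul_eq_two_trace_Ctens (B : Mat3) (hB : B.PosDef) (hdet : B.det = 1)
    (M : Mat3) (hM : Mᵀ = M) :
    (B⁻¹ * M).trace = 2 * (contr (Ctens B) M).trace := by
  have hBinv : B⁻¹ = B.adjugate := by
    rw [Matrix.inv_def, hdet, Ring.inverse_one, one_smul]
  -- integrability of each symmetrized-entry integrand
  have hsint : ∀ i j k l : Fin 3, MeasureTheory.IntegrableOn
      (fun s => symmetrize (otimes (res B s) (res B s)) i j k l
        / Real.sqrt ((B + s • (1:Mat3)).det)) (Ioi 0) := by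
    intro i j k l
    have h1 : (fun s => symmetrize (otimes (res B s) (res B s)) i j k l
          / Real.sqrt ((B + s • (1:Mat3)).det))
        = fun s => (∑ σ : Equiv.Perm (Fin 4),
            res B s (![i,j,k,l] (σ 0)) (![i,j,k,l] (σ 1))
              * res B s (![i,j,k,l] (σ 2)) (![i,j,k,l] (σ 3))
              / Real.sqrt ((B + s • (1:Mat3)).det)) / 24 := by
      funext s
      simp only [symmetrize, otimes]
      rw [div_right_comm, Finset.sum_div]
    rw [h1]
    exact (MeasureTheory.integrable_finset_sum _
      (fun σ _ => entry_int B hB _ _ _ _)).div_const 24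
  have hIikl : ∀ i k l : Fin 3, MeasureTheory.IntegrableOn
      (fun s => 3/4 * (symmetrize (otimes (res B s) (res B s)) i i k l
        / Real.sqrt ((B + s • (1:Mat3)).det)) * M k l) (Ioi 0) :=
    fun i k l => ((hsint i i k l).const_mul (3/4)).mul_const (M k l)
  -- expand the trace of the contraction into a triple sum of integrals
  have hterm : ∀ i k l : Fin 3, Ctens B i i k l * M k l
      = ∫ s in Ioi (0:ℝ), 3/4 * (symmetrize (otimes (res B s) (res B s)) i i k l
          / Real.sqrt ((B + s • (1:Mat3)).det)) * M k l := by
    intro i k l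
    simp only [Ctens]
    rw [← MeasureTheory.integral_const_mul, ← MeasureTheory.integral_mul_const]
  have hexp : (contr (Ctens B) M).trace = ∑ i, ∑ k, ∑ l, Ctens B i i k l * M k l := by
    simp [Matrix.trace, Matrix.diag, contr]
  -- swap finite sums and integral
  have h1 : ∀ i k : Fin 3, ∑ l, ∫ s in Ioi (0:ℝ),
        (3/4 * (symmetrize (otimes (res B s) (res B s)) i i k l
          / Real.sqrt ((B + s • (1:Mat3)).det)) * M k l)
      = ∫ s in Ioi (0:ℝ), ∑ l, (3/4 * (symmetrize (otimes (res B s) (res B s)) i i k l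
          / Real.sqrt ((B + s • (1:Mat3)).det)) * M k l) :=
    fun i k => (MeasureTheory.integral_finset_sum _ (fun l _ => hIikl i k l)).symm
  have h2 : ∀ i : Fin 3, ∑ k, ∑ l, (∫ s in Ioi (0:ℝ),
        (3/4 * (symmetrize (otimes (res B s) (res B s)) i i k l
          / Real.sqrt ((B + s • (1:Mat3)).det)) * M k l))
      = ∫ s in Ioi (0:ℝ), ∑ k, ∑ l, (3/4 * (symmetrize (otimes (res B s) (res B s)) i i k l
          / Real.sqrt ((B + s • (1:Mat3)).det)) * M k l) := by
    intro i
    rw [Finset.sum_congr rfl (fun k _ => h1 i k)]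
    exact (MeasureTheory.integral_finset_sum _
      (fun k _ => MeasureTheory.integrable_finset_sum _ (fun l _ => hIikl i k l))).symm
  have h3 : ∑ i : Fin 3, ∑ k, ∑ l, (∫ s in Ioi (0:ℝ),
        (3/4 * (symmetrize (otimes (res B s) (res B s)) i i k l
          / Real.sqrt ((B + s • (1:Mat3)).det)) * M k l))
      = ∫ s in Ioi (0:ℝ), ∑ i, ∑ k, ∑ l, (3/4 * (symmetrize (otimes (res B s) (res B s)) i i k l
          / Real.sqrt ((B + s • (1:Mat3)).det)) * M k l) := by
    rw [Finset.sum_congr rfl (fun i _ => h2 i)]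
    exact (MeasureTheory.integral_finset_sum _
      (fun i _ => MeasureTheory.integrable_finset_sum _
        (fun k _ => MeasureTheory.integrable_finset_sum _ (fun l _ => hIikl i k l)))).symm
  -- pointwise evaluation of the summed integrand
  have hpt : (fun s => ∑ i : Fin 3, ∑ k, ∑ l,
        (3/4 * (symmetrize (otimes (res B s) (res B s)) i i k l
          / Real.sqrt ((B + s • (1:Mat3)).det)) * M k l))
      = fun s => 1/4 * (((res B s).trace * (res B s * M).trace
          + 2 * (res B s * res B s * M).trace) / Real.sqrt ((B + s • (1:Mat3)).det)) := by
    funext s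
    have e : ∀ i k l : Fin 3, 3/4 * (symmetrize (otimes (res B s) (res B s)) i i k l
          / Real.sqrt ((B + s • (1:Mat3)).det)) * M k l
        = symmetrize (otimes (res B s) (res B s)) i i k l * M k l
            * (3/(4 * Real.sqrt ((B + s • (1:Mat3)).det))) := fun i k l => by ring
    simp only [e, ← Finset.sum_mul]
    rw [sym_contract (res B s) M (res_symm B hB s) hM]
    ring
  rw [hBinv, hexp]
  simp only [hterm]
  rw [h3, hpt, MeasureTheory.integral_const_mul, matrix_FTC B hB hdet M]
  ring
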